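/- Let f : {0,1}^n → {0,1} and suppose there exists an ℓ-variable max-sensitivity distribution D over restrictions: (1) with probability ≥ 0.9 at least ℓ variables are left free; (2) for every ρ in the support, the sensitivity of f|_ρ equals the number of free variables; (3) for every generalized monomial M (a product of variables x_i and complemented variables 1-x_j) and every t ∈ ℕ, Pr_{ρ~D}[deg(M|_ρ) ≥ t] ≤ 2^{-t}. Then the logarithm of the 1/3-approximate generalized sparsity of f is Ω(√ℓ). -/

import Mathlib

open Finset Classical

/-- A Boolean function viewed as a real-valued function. -/
noncomputable def toRealFn {n : ℕ} (f : (Fin n → Bool) → Bool) : (Fin n → Bool) → ℝ :=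
  fun x => if f x then 1 else 0

/-- Evaluation of a generalized polynomial: a real linear combination of generalized
monomials `∏_{i ∈ P} x_i · ∏_{j ∈ N} (1 - x_j)`, given by its coefficient function `b`. -/
noncomputable def gEval {n : ℕ} (b : Finset (Fin n) × Finset (Fin n) → ℝ)
    (x : Fin n → Bool) : ℝ :=
  ∑ p : Finset (Fin n) × Finset (Fin n),
    b p * (∏ i ∈ p.1, (if x i then (1 : ℝ) else 0)) *
      (∏ j ∈ p.2, (if x j then (0 : ℝ) else 1))

/-- The `1/3`-approximate generalized sparsity of `f`: the least number of generalized
monomials (with `P, N` disjoint) in a generalized polynomial approximating `f` within `1/3`. -/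
noncomputable def gasparsity {n : ℕ} (f : (Fin n → Bool) → Bool) : ℕ :=
  sInf {s : ℕ | ∃ b : Finset (Fin n) × Finset (Fin n) → ℝ,
    (∀ p, b p ≠ 0 → Disjoint p.1 p.2) ∧
    (∀ x, |gEval b x - toRealFn f x| ≤ 1 / 3) ∧
    ((Finset.univ : Finset (Finset (Fin n) × Finset (Fin n))).filter
        (fun p => b p ≠ 0)).card ≤ s}

/-- The free variables of a restriction `ρ : Fin n → Option Bool` (`none` = free). -/
def freeVars {n : ℕ} (ρ : Fin n → Option Bool) : Finset (Fin n) :=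
  (Finset.univ : Finset (Fin n)).filter (fun i => ρ i = none)

/-- The restricted function `f|_ρ`, presented on full inputs via overriding set variables. -/
def restrictFn {n : ℕ} (f : (Fin n → Bool) → Bool) (ρ : Fin n → Option Bool) :
    (Fin n → Bool) → Bool :=
  fun x => f (fun i => (ρ i).getD (x i))

/-- The set of sensitive coordinates of `f` at `x`, as a finset. -/
def sensF {n : ℕ} (f : (Fin n → Bool) → Bool) (x : Fin n → Bool) : Finset (Fin n) :=
  (Finset.univ : Finset (Fin n)).filter
    (fun i => f (Function.update x i (! x i)) ≠ f x)

/-- Probability of an event under a (finitely supported) distribution `D` on restrictions. -/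
noncomputable def prOf {n : ℕ} (D : (Fin n → Option Bool) → ℝ)
    (E : (Fin n → Option Bool) → Prop) : ℝ :=
  ∑ ρ ∈ (Finset.univ : Finset (Fin n → Option Bool)).filter E, D ρ

/-- Degree of the restricted generalized monomial `(∏_{i∈P} x_i ∏_{j∈N}(1-x_j))|_ρ`: it is
`0` if the monomial is killed (some `i ∈ P` set to 0, or some `j ∈ N` set to 1), and
otherwise the number of its free variables. -/
def gMonRestDeg {n : ℕ} (ρ : Fin n → Option Bool) (P N : Finset (Fin n)) : ℕ :=
  if (∃ i ∈ P, ρ i = some false) ∨ (∃ j ∈ N, ρ j = some true) then 0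
  else ((P ∪ N).filter (fun i => ρ i = none)).card

section Stmt18Aux
open Polynomial



lemma prod_nonpos_sign (E : Finset ℕ) (g : ℕ → ℝ) (h : ∀ j ∈ E, g j ≤ 0) :
    0 ≤ (-1 : ℝ) ^ E.card * ∏ j ∈ E, g j := by
  have h2 : ∏ j ∈ E, (-(g j)) = (-1 : ℝ) ^ E.card * ∏ j ∈ E, g j := by
    rw [show (fun j => -(g j)) = fun j => (-1 : ℝ) * g j by funext j; ring]
    rw [Finset.prod_mul_distrib, Finset.prod_const]
  rw [← h2]
  exact Finset.prod_nonneg fun j hj => neg_nonneg.mpr (h j hj)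

lemma derivative_finset_prod (s : Finset ℕ) (f : ℕ → Polynomial ℝ) :
    derivative (∏ i ∈ s, f i) = ∑ i ∈ s, (∏ j ∈ s.erase i, f j) * derivative (f i) := by
  classical
  induction s using Finset.induction_on with
  | empty => simp
  | insert _ _ ha ih =>
    rename_i a s'
    rw [Finset.prod_insert ha, derivative_mul, ih, Finset.sum_insert ha,
      Finset.erase_insert ha, Finset.mul_sum]
    have hsum : ∀ i ∈ s', (∏ j ∈ (insert a s').erase i, f j) * derivative (f i)
        = f a * ((∏ j ∈ s'.erase i, f j) * derivative (f i)) := by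
      intro i hi
      rw [Finset.erase_insert_of_ne (by rintro rfl; exact ha hi),
        Finset.prod_insert (fun h => ha (Finset.mem_of_mem_erase h)), mul_assoc]
    rw [Finset.sum_congr rfl hsum, ← Finset.mul_sum]
    ring

lemma chebT_natDegree_le : ∀ m : ℕ, (Polynomial.Chebyshev.T ℝ (m : ℤ)).natDegree ≤ m := by
  intro m
  induction m using Nat.twoStepInduction with
  | zero => simp [Polynomial.Chebyshev.T_zero]
  | one => simp [Polynomial.Chebyshev.T_one]
  | more m ih1 ih2 =>
    calc (Polynomial.Chebyshev.T ℝ ((m+2:ℕ) : ℤ)).natDegree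
        = (2*X*Polynomial.Chebyshev.T ℝ ((m:ℤ)+1) - Polynomial.Chebyshev.T ℝ (m:ℤ)).natDegree := by
          rw [show ((m+2:ℕ):ℤ) = (m:ℤ)+2 by push_cast; ring, Polynomial.Chebyshev.T_add_two]
      _ ≤ max (2*X*Polynomial.Chebyshev.T ℝ ((m:ℤ)+1)).natDegree
            (Polynomial.Chebyshev.T ℝ (m:ℤ)).natDegree := natDegree_sub_le _ _
      _ ≤ m + 2 := by
          apply max_le
          · refine le_trans natDegree_mul_le ?_
            have h1 : (2*X : Polynomial ℝ).natDegree ≤ 1 := le_trans natDegree_mul_le (by simp)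
            have h2 : (Polynomial.Chebyshev.T ℝ ((m:ℤ)+1)).natDegree ≤ m+1 := by
              have h3 := ih2
              rwa [show ((m+1:ℕ):ℤ) = (m:ℤ)+1 by push_cast; ring] at h3
            omega
          · exact le_trans ih1 (by omega)

lemma chebU_eval_one : ∀ m : ℕ, (Polynomial.Chebyshev.U ℝ (m : ℤ)).eval 1 = (m : ℝ) + 1 := by
  intro m
  induction m using Nat.twoStepInduction with
  | zero => simp [Polynomial.Chebyshev.U_zero]
  | one => rw [show ((1:ℕ):ℤ) = 1 by norm_num, Polynomial.Chebyshev.U_one]; simp; norm_num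
  | more m ih1 ih2 =>
    rw [show ((m+2:ℕ):ℤ) = (m:ℤ)+2 by push_cast; ring, Polynomial.Chebyshev.U_add_two]
    rw [show ((m+1:ℕ):ℤ) = (m:ℤ)+1 by push_cast; ring] at ih2
    simp only [eval_sub, eval_mul, eval_ofNat, eval_X, ih2, ih1]
    push_cast
    ring


noncomputable def vnode (Dd k : ℕ) : ℝ := Real.cos (k * Real.pi / Dd)

lemma vnode_le_one (Dd k : ℕ) : vnode Dd k ≤ 1 := Real.cos_le_one _
lemma neg_one_le_vnode (Dd k : ℕ) : -1 ≤ vnode Dd k := Real.neg_one_le_cos _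

lemma vnode_zero (Dd : ℕ) : vnode Dd 0 = 1 := by simp [vnode]

lemma vnode_angle_mem (Dd : ℕ) (hD : 1 ≤ Dd) (k : ℕ) (hk : k ≤ Dd) :
    (k * Real.pi / Dd) ∈ Set.Icc 0 Real.pi := by
  constructor
  · positivity
  · rw [div_le_iff₀ (by positivity : (0:ℝ) < (Dd:ℝ))]
    have : (k:ℝ) ≤ Dd := by exact_mod_cast hk
    nlinarith [Real.pi_pos]

lemma vnode_anti (Dd : ℕ) (hD : 1 ≤ Dd) {a b : ℕ} (ha : a ≤ Dd) (hb : b ≤ Dd) (hab : a < b) :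
    vnode Dd b < vnode Dd a := by
  apply Real.strictAntiOn_cos (vnode_angle_mem Dd hD a ha) (vnode_angle_mem Dd hD b hb)
  have hD0 : (0:ℝ) < (Dd:ℝ) := by positivity
  have : (a:ℝ) < (b:ℝ) := by exact_mod_cast hab
  have hpi := Real.pi_pos
  exact div_lt_div_of_pos_right (by nlinarith) hD0

lemma vnode_injOn (Dd : ℕ) (hD : 1 ≤ Dd) :
    Set.InjOn (vnode Dd) ↑(Finset.range (Dd+1)) := by
  intro a ha b hb hab
  simp only [Finset.coe_range, Set.mem_Iio] at ha hb
  rcases lt_trichotomy a b with h | h | h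
  · exact absurd hab (ne_of_gt (vnode_anti Dd hD (by omega) (by omega) h))
  · exact h
  · exact absurd hab (ne_of_lt (vnode_anti Dd hD (by omega) (by omega) h))

lemma basis_deriv_sign (Dd : ℕ) (hD : 1 ≤ Dd) (k : ℕ) (hk : k ≤ Dd) :
    0 ≤ (-1:ℝ)^k *
      (derivative (Lagrange.basis (Finset.range (Dd+1)) (vnode Dd) k)).eval 1 := by
  classical
  set s : Finset ℕ := Finset.range (Dd+1) with hs
  set v : ℕ → ℝ := vnode Dd with hv
  have hvle : ∀ j, v j ≤ 1 := fun j => vnode_le_one Dd j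
  have hv0 : v 0 = 1 := vnode_zero Dd
  have hvanti : ∀ {a b : ℕ}, a ≤ Dd → b ≤ Dd → a < b → v b < v a :=
    fun ha hb hab => vnode_anti Dd hD ha hb hab
  have hdbd : ∀ x y : ℝ, derivative (Lagrange.basisDivisor x y) = C (x - y)⁻¹ := by
    intro x y
    unfold Lagrange.basisDivisor
    rw [derivative_C_mul, derivative_sub, derivative_X, derivative_C]
    simp
  have hebd : ∀ x y : ℝ, (Lagrange.basisDivisor x y).eval 1 = (x - y)⁻¹ * (1 - y) := by
    intro x y; simp [Lagrange.basisDivisor]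
  have hBval : (derivative (Lagrange.basis s v k)).eval 1
      = ∑ a ∈ s.erase k,
        (∏ j ∈ (s.erase k).erase a, (v k - v j)⁻¹ * (1 - v j)) * (v k - v a)⁻¹ := by
    show (derivative (∏ j ∈ s.erase k, Lagrange.basisDivisor (v k) (v j))).eval 1 = _
    rw [derivative_finset_prod, eval_finset_sum]
    refine Finset.sum_congr rfl fun a ha => ?_
    rw [eval_mul, hdbd, eval_C, eval_prod]
    congr 1
    exact Finset.prod_congr rfl fun j hj => hebd _ _
  rw [hBval]
  rcases Nat.eq_zero_or_pos k with rfl | hkpos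
  · simp only [pow_zero, one_mul]
    apply Finset.sum_nonneg
    intro a ha
    apply mul_nonneg
    · apply Finset.prod_nonneg
      intro j hj
      apply mul_nonneg
      · apply inv_nonneg.mpr; rw [hv0]; linarith [hvle j]
      · linarith [hvle j]
    · apply inv_nonneg.mpr; rw [hv0]; linarith [hvle a]
  · obtain ⟨k', rfl⟩ : ∃ k', k = k' + 1 := ⟨k - 1, by omega⟩
    have h0mem : (0:ℕ) ∈ s.erase (k'+1) := by
      rw [Finset.mem_erase]
      refine ⟨by omega, ?_⟩
      simp [hs]
    rw [Finset.sum_eq_single_of_mem 0 h0mem ?side]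
    case side =>
      intro a ha hane
      apply mul_eq_zero_of_left
      apply Finset.prod_eq_zero (i := 0)
      · exact Finset.mem_erase.mpr ⟨(Ne.symm hane), h0mem⟩
      · rw [hv0]; simp
    · -- main sign computation
      set E : Finset ℕ := (s.erase (k'+1)).erase 0 with hE
      set g : ℕ → ℝ := fun j => (v (k'+1) - v j)⁻¹ * (1 - v j) with hg
      have hEsplit := Finset.prod_filter_mul_prod_filter_not E (fun j => j < k'+1) g
      have hfilt : E.filter (fun j => j < k'+1) = Finset.Ico 1 (k'+1) := by
        ext j
        simp only [hE, hs, Finset.mem_filter, Finset.mem_erase, Finset.mem_range,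
          Finset.mem_Ico]
        omega
      have hcardlt : (E.filter (fun j => j < k'+1)).card = k' := by
        rw [hfilt, Nat.card_Ico]; omega
      have h1 : 0 ≤ (-1:ℝ)^k' * ∏ j ∈ E.filter (fun j => j < k'+1), g j := by
        have hps := prod_nonpos_sign (E.filter (fun j => j < k'+1)) g ?_
        · rwa [hcardlt] at hps
        intro j hj
        simp only [hE, hs, Finset.mem_filter, Finset.mem_erase, Finset.mem_range] at hj
        have hvkj : v (k'+1) ≤ v j := le_of_lt (hvanti (by omega) (by omega) (by omega))
        have hga : (v (k'+1) - v j)⁻¹ ≤ 0 := inv_nonpos.mpr (by linarith)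
        have hgb : (0:ℝ) ≤ 1 - v j := by linarith [hvle j]
        exact mul_nonpos_iff.mpr (Or.inr ⟨hga, hgb⟩)
      have h2 : 0 ≤ ∏ j ∈ E.filter (fun j => ¬ j < k'+1), g j := by
        apply Finset.prod_nonneg
        intro j hj
        simp only [hE, hs, Finset.mem_filter, Finset.mem_erase, Finset.mem_range] at hj
        have hvkj : v j ≤ v (k'+1) := le_of_lt (hvanti (by omega) (by omega) (by omega))
        apply mul_nonneg (inv_nonneg.mpr (by linarith))
        linarith [hvle j]
      have h3 : 0 ≤ -((v (k'+1) - v 0)⁻¹) := by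
        rw [hv0]
        have h4 : (v (k'+1) - 1)⁻¹ ≤ 0 := inv_nonpos.mpr (by linarith [hvle (k'+1)])
        linarith
      have key : (-1:ℝ)^(k'+1) * ((∏ j ∈ E, g j) * (v (k'+1) - v 0)⁻¹)
          = ((-1:ℝ)^k' * ∏ j ∈ E.filter (fun j => j < k'+1), g j)
            * (∏ j ∈ E.filter (fun j => ¬ j < k'+1), g j)
            * (-((v (k'+1) - v 0)⁻¹)) := by
        rw [← hEsplit, pow_succ]; ring
      calc (0:ℝ) ≤ ((-1:ℝ)^k' * ∏ j ∈ E.filter (fun j => j < k'+1), g j)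
            * (∏ j ∈ E.filter (fun j => ¬ j < k'+1), g j)
            * (-((v (k'+1) - v 0)⁻¹)) := mul_nonneg (mul_nonneg h1 h2) h3
        _ = (-1:ℝ)^(k'+1) * ((∏ j ∈ E, g j) * (v (k'+1) - v 0)⁻¹) := key.symm

theorem markov_endpoint (Dd : ℕ) (hD : 1 ≤ Dd) (p : Polynomial ℝ) (hdeg : p.natDegree ≤ Dd)
    (M : ℝ) (hM : ∀ x : ℝ, -1 ≤ x → x ≤ 1 → |p.eval x| ≤ M) :
    |(derivative p).eval 1| ≤ (Dd:ℝ)^2 * M := by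
  classical
  set s : Finset ℕ := Finset.range (Dd+1) with hs
  set v : ℕ → ℝ := vnode Dd with hv
  have hvinj : Set.InjOn v ↑s := vnode_injOn Dd hD
  have hcard : s.card = Dd + 1 := Finset.card_range _
  set W : ℕ → ℝ := fun k => (derivative (Lagrange.basis s v k)).eval 1 with hW
  have deriv_interp : ∀ r : ℕ → ℝ,
      (derivative (Lagrange.interpolate s v r)).eval 1 = ∑ k ∈ s, r k * W k := by
    intro r
    rw [Lagrange.interpolate_apply, derivative_sum, eval_finset_sum]
    exact Finset.sum_congr rfl fun k hk => by rw [derivative_C_mul, eval_mul, eval_C]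
  have hdeglt : p.degree < (s.card : WithBot ℕ) := by
    refine lt_of_le_of_lt degree_le_natDegree ?_
    rw [hcard]
    exact_mod_cast Nat.lt_succ_of_le hdeg
  have hp1 : (derivative p).eval 1 = ∑ k ∈ s, p.eval (v k) * W k := by
    conv_lhs => rw [Lagrange.eq_interpolate hvinj hdeglt]
    exact deriv_interp _
  have hTdeglt : (Polynomial.Chebyshev.T ℝ (Dd:ℤ)).degree < (s.card : WithBot ℕ) := by
    refine lt_of_le_of_lt degree_le_natDegree ?_
    rw [hcard]
    exact_mod_cast Nat.lt_succ_of_le (chebT_natDegree_le Dd)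
  have hTval : ∀ k ∈ s, (Polynomial.Chebyshev.T ℝ (Dd:ℤ)).eval (v k) = (-1:ℝ)^k := by
    intro k hk
    have hDne : (Dd:ℝ) ≠ 0 := Nat.cast_ne_zero.mpr (by omega)
    have hvk : v k = Real.cos (k * Real.pi / Dd) := rfl
    rw [hvk, Polynomial.Chebyshev.T_real_cos]
    rw [show ((Dd:ℤ):ℝ) * (k * Real.pi / Dd) = k * Real.pi by push_cast; field_simp]
    have hc := Real.cos_nat_mul_pi_sub 0 k
    simpa using hc
  have hT1 : (derivative (Polynomial.Chebyshev.T ℝ (Dd:ℤ))).eval 1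
      = ∑ k ∈ s, (-1:ℝ)^k * W k := by
    conv_lhs => rw [Lagrange.eq_interpolate_of_eval_eq _ hvinj hTdeglt hTval]
    exact deriv_interp _
  have hT2 : (derivative (Polynomial.Chebyshev.T ℝ (Dd:ℤ))).eval 1 = (Dd:ℝ)^2 := by
    rw [Polynomial.Chebyshev.T_derivative_eq_U]
    rw [show ((Dd:ℤ) - 1) = ((Dd - 1 : ℕ) : ℤ) by omega]
    rw [eval_mul, chebU_eval_one (Dd - 1)]
    have hc : ((Dd - 1 : ℕ) : ℝ) = (Dd:ℝ) - 1 := by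
      have : (1:ℕ) ≤ Dd := hD
      push_cast [Nat.cast_sub this]
      ring
    rw [hc]
    simp only [eval_intCast, eval_natCast, Int.cast_natCast, Polynomial.eval_mul]
    push_cast
    ring
  have hM0 : 0 ≤ M := le_trans (abs_nonneg _) (hM 1 (by norm_num) (by norm_num))
  have hWabs : ∀ k ∈ s, |W k| = (-1:ℝ)^k * W k := by
    intro k hk
    have hk' : k ≤ Dd := by
      have := Finset.mem_range.mp (by rwa [hs] at hk)
      omega
    have hsig := basis_deriv_sign Dd hD k hk'
    have : |(-1:ℝ)^k * W k| = |W k| := by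
      rw [abs_mul, abs_pow, abs_neg, abs_one, one_pow, one_mul]
    rw [← this, abs_of_nonneg hsig]
  calc |(derivative p).eval 1| = |∑ k ∈ s, p.eval (v k) * W k| := by rw [hp1]
    _ ≤ ∑ k ∈ s, |p.eval (v k) * W k| := Finset.abs_sum_le_sum_abs _ _
    _ ≤ ∑ k ∈ s, M * ((-1:ℝ)^k * W k) := by
        refine Finset.sum_le_sum fun k hk => ?_
        rw [abs_mul, ← hWabs k hk]
        refine mul_le_mul_of_nonneg_right ?_ (abs_nonneg _)
        exact hM (v k) (neg_one_le_vnode Dd k) (vnode_le_one Dd k)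
    _ = M * ∑ k ∈ s, (-1:ℝ)^k * W k := by rw [Finset.mul_sum]
    _ = M * (Dd:ℝ)^2 := by rw [← hT1, hT2]
    _ = (Dd:ℝ)^2 * M := by ring



lemma prod_ite_mem_split {α : Type*} [DecidableEq α] {F S : Finset α} (h : S ⊆ F)
    (u w : α → ℝ) :
    ∏ i ∈ F, (if i ∈ S then u i else w i) = (∏ i ∈ S, u i) * ∏ i ∈ F \ S, w i := by
  rw [← Finset.prod_filter_mul_prod_filter_not F (fun i => i ∈ S)]
  congr 1
  · rw [Finset.filter_mem_eq_inter, Finset.inter_eq_right.mpr h]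
    exact Finset.prod_congr rfl fun i hi => if_pos hi
  · rw [← Finset.sdiff_eq_filter]
    exact Finset.prod_congr rfl fun i hi => if_neg (Finset.mem_sdiff.mp hi).2

lemma sumprod {α : Type*} [DecidableEq α] (F : Finset α) (u w : α → ℝ) :
    ∑ S ∈ F.powerset, ∏ i ∈ F, (if i ∈ S then u i else w i) = ∏ i ∈ F, (u i + w i) := by
  rw [Finset.prod_add]
  exact Finset.sum_congr rfl fun S hS =>
    prod_ite_mem_split (Finset.mem_powerset.mp hS) u w

lemma weight_eq_prod {α : Type*} [DecidableEq α] {F S : Finset α} (h : S ⊆ F) (τ : ℝ) :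
    τ ^ S.card * (1 - τ) ^ (F.card - S.card)
      = ∏ i ∈ F, (if i ∈ S then τ else 1 - τ) := by
  rw [prod_ite_mem_split h, Finset.prod_const, Finset.prod_const,
    Finset.card_sdiff_of_subset h]

lemma weight_sum {α : Type*} [DecidableEq α] (F : Finset α) (τ : ℝ) :
    ∑ S ∈ F.powerset, τ ^ S.card * (1 - τ) ^ (F.card - S.card) = 1 := by
  rw [Finset.sum_congr rfl fun S hS => weight_eq_prod (Finset.mem_powerset.mp hS) τ,
    sumprod]
  simp

def bflip {n : ℕ} (x₀ : Fin n → Bool) (S : Finset (Fin n)) : Fin n → Bool :=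
  fun i => if i ∈ S then !(x₀ i) else x₀ i

def ovr {n : ℕ} (ρ : Fin n → Option Bool) (x : Fin n → Bool) : Fin n → Bool :=
  fun i => (ρ i).getD (x i)

noncomputable def vtp {n : ℕ} (ρ : Fin n → Option Bool) (x₀ : Fin n → Bool) (i : Fin n) :
    Polynomial ℝ :=
  if ρ i = none then (if x₀ i then 1 - X else X)
  else C (if (ρ i).getD true then (1:ℝ) else 0)

lemma vtp_eval_free {n : ℕ} {ρ : Fin n → Option Bool} (x₀ : Fin n → Bool) {i : Fin n}
    (hρ : ρ i = none) (τ : ℝ) :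
    (vtp ρ x₀ i).eval τ = if x₀ i then 1 - τ else τ := by
  unfold vtp
  rw [if_pos hρ]
  by_cases hx : x₀ i <;> simp [hx]

lemma vtp_eval_fixed {n : ℕ} {ρ : Fin n → Option Bool} (x₀ : Fin n → Bool) {i : Fin n}
    {v : Bool} (hρ : ρ i = some v) (τ : ℝ) :
    (vtp ρ x₀ i).eval τ = if v then 1 else 0 := by
  unfold vtp
  rw [if_neg (by simp [hρ]), eval_C, hρ]
  rfl

lemma mono_prod {n : ℕ} (P N : Finset (Fin n)) (f g : Fin n → ℝ) :
    (∏ i ∈ P, f i) * (∏ j ∈ N, g j)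
      = ∏ i : Fin n, ((if i ∈ P then f i else 1) * (if i ∈ N then g i else 1)) := by
  rw [Finset.prod_mul_distrib, Finset.prod_ite_mem, Finset.prod_ite_mem,
    Finset.univ_inter, Finset.univ_inter]

lemma claimp {n : ℕ} (ρ : Fin n → Option Bool) (x₀ : Fin n → Bool)
    (P N : Finset (Fin n)) (hPN : Disjoint P N) (τ : ℝ) :
    ∑ S ∈ (freeVars ρ).powerset,
      (τ ^ S.card * (1 - τ) ^ ((freeVars ρ).card - S.card))
        * ((∏ i ∈ P, (if ovr ρ (bflip x₀ S) i then (1:ℝ) else 0))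
          * ∏ j ∈ N, (if ovr ρ (bflip x₀ S) j then (0:ℝ) else 1))
    = (∏ i ∈ P, (vtp ρ x₀ i).eval τ) * ∏ j ∈ N, (1 - (vtp ρ x₀ j).eval τ) := by
  classical
  set F := freeVars ρ with hF
  set φ : Fin n → Bool → ℝ := fun i v =>
    (if i ∈ P then (if (ρ i).getD v then (1:ℝ) else 0) else 1)
      * (if i ∈ N then (if (ρ i).getD v then (0:ℝ) else 1) else 1) with hφ
  have hfree : ∀ i ∈ F, ρ i = none := by
    intro i hi
    simpa [hF, freeVars] using hi
  have hfixed : ∀ i ∈ Fᶜ, ∃ v, ρ i = some v := by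
    intro i hi
    rw [Finset.mem_compl] at hi
    have : ρ i ≠ none := fun hc => hi (by simp [hF, freeVars, hc])
    exact Option.ne_none_iff_exists'.mp this
  -- rewrite each summand
  have hterm : ∀ S ∈ F.powerset,
      (τ ^ S.card * (1 - τ) ^ (F.card - S.card))
        * ((∏ i ∈ P, (if ovr ρ (bflip x₀ S) i then (1:ℝ) else 0))
          * ∏ j ∈ N, (if ovr ρ (bflip x₀ S) j then (0:ℝ) else 1))
      = (∏ i ∈ F, (if i ∈ S then τ * φ i (!(x₀ i)) else (1 - τ) * φ i (x₀ i)))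
          * ∏ i ∈ Fᶜ, φ i true := by
    intro S hS
    have hSF := Finset.mem_powerset.mp hS
    have hmono : (∏ i ∈ P, (if ovr ρ (bflip x₀ S) i then (1:ℝ) else 0))
        * ∏ j ∈ N, (if ovr ρ (bflip x₀ S) j then (0:ℝ) else 1)
        = ∏ i : Fin n, φ i (bflip x₀ S i) := by
      rw [mono_prod]
      rfl
    rw [hmono, ← Finset.prod_mul_prod_compl F (fun i => φ i (bflip x₀ S i))]
    have hcompl : ∏ i ∈ Fᶜ, φ i (bflip x₀ S i) = ∏ i ∈ Fᶜ, φ i true := by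
      refine Finset.prod_congr rfl fun i hi => ?_
      obtain ⟨v, hv⟩ := hfixed i hi
      simp only [hφ, hv, Option.getD_some]
    have hfreeprod : ∏ i ∈ F, φ i (bflip x₀ S i)
        = ∏ i ∈ F, (if i ∈ S then φ i (!(x₀ i)) else φ i (x₀ i)) := by
      refine Finset.prod_congr rfl fun i hi => ?_
      by_cases hiS : i ∈ S <;> simp [bflip, hiS]
    rw [hcompl, hfreeprod, weight_eq_prod hSF]
    rw [show (∏ i ∈ F, (if i ∈ S then τ else 1 - τ))
          * ((∏ i ∈ F, (if i ∈ S then φ i (!(x₀ i)) else φ i (x₀ i))) * ∏ i ∈ Fᶜ, φ i true)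
        = ((∏ i ∈ F, (if i ∈ S then τ else 1 - τ))
            * (∏ i ∈ F, (if i ∈ S then φ i (!(x₀ i)) else φ i (x₀ i)))) * ∏ i ∈ Fᶜ, φ i true
      from by ring]
    rw [← Finset.prod_mul_distrib]
    congr 1
    refine Finset.prod_congr rfl fun i hi => ?_
    by_cases hiS : i ∈ S <;> simp [hiS]
  rw [Finset.sum_congr rfl hterm, ← Finset.sum_mul, sumprod]
  -- now the right-hand side
  have hrhs : (∏ i ∈ P, (vtp ρ x₀ i).eval τ) * ∏ j ∈ N, (1 - (vtp ρ x₀ j).eval τ)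
      = (∏ i ∈ F, (τ * φ i (!(x₀ i)) + (1 - τ) * φ i (x₀ i))) * ∏ i ∈ Fᶜ, φ i true := by
    rw [mono_prod]
    rw [← Finset.prod_mul_prod_compl F]
    congr 1
    · refine Finset.prod_congr rfl fun i hi => ?_
      have hρi := hfree i hi
      rw [vtp_eval_free x₀ hρi]
      by_cases hp : i ∈ P
      · have hn : i ∉ N := Finset.disjoint_left.mp hPN hp
        cases hx : x₀ i <;> simp [hφ, hp, hn, hρi, hx] <;> try ring
      · by_cases hn : i ∈ N
        · cases hx : x₀ i <;> simp [hφ, hp, hn, hρi, hx] <;> try ring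
        · simp [hφ, hp, hn]
          try ring
    · refine Finset.prod_congr rfl fun i hi => ?_
      obtain ⟨v, hv⟩ := hfixed i hi
      rw [vtp_eval_fixed x₀ hv]
      cases v <;> simp [hφ, hv]
  rw [hrhs]

lemma dxa (a c : ℕ) :
    (derivative ((X:Polynomial ℝ)^a * (1 - X)^c)).eval 0
      = if a = 0 then -(c:ℝ) else if a = 1 then 1 else 0 := by
  have h1 : derivative ((1:Polynomial ℝ) - X) = -1 := by
    rw [derivative_sub, derivative_one, derivative_X]; ring
  rw [derivative_mul, derivative_X_pow, derivative_pow, h1, eval_add]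
  simp only [eval_mul, eval_pow, eval_sub, eval_one, eval_X, eval_natCast, eval_neg, eval_C]
  rcases a with _ | _ | a <;> simp <;> norm_num

lemma vtp_natDegree {n : ℕ} (ρ : Fin n → Option Bool) (x₀ : Fin n → Bool) (i : Fin n) :
    (vtp ρ x₀ i).natDegree ≤ if ρ i = none then 1 else 0 := by
  unfold vtp
  by_cases hρ : ρ i = none
  · rw [if_pos hρ, if_pos hρ]
    by_cases hx : x₀ i
    · rw [if_pos hx]
      refine le_trans (natDegree_sub_le _ _) ?_
      simp
    · rw [if_neg hx, natDegree_X]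
  · rw [if_neg hρ, if_neg hρ, natDegree_C]

lemma one_sub_vtp_natDegree {n : ℕ} (ρ : Fin n → Option Bool) (x₀ : Fin n → Bool) (i : Fin n) :
    ((1:Polynomial ℝ) - vtp ρ x₀ i).natDegree ≤ if ρ i = none then 1 else 0 := by
  refine le_trans (natDegree_sub_le _ _) ?_
  rw [natDegree_one]
  simpa using vtp_natDegree ρ x₀ i

theorem core_bound {n : ℕ} (ρ : Fin n → Option Bool) (x₀ : Fin n → Bool)
    (g : (Fin n → Bool) → Bool)
    (b : Finset (Fin n) × Finset (Fin n) → ℝ) (Dd : ℕ) (hD : 1 ≤ Dd)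
    (hdisj : ∀ p, b p ≠ 0 → Disjoint p.1 p.2)
    (hdeg : ∀ p, b p ≠ 0 → gMonRestDeg ρ p.1 p.2 ≤ Dd)
    (happ : ∀ x, |gEval b (ovr ρ x) - toRealFn g x| ≤ 1/3)
    (hsens : ∀ i ∈ freeVars ρ, g (Function.update x₀ i (!(x₀ i))) ≠ g x₀) :
    (((freeVars ρ).card : ℝ)) ≤ 8 * (Dd:ℝ)^2 := by
  classical
  set F := freeVars ρ with hF
  set m := F.card with hm
  set h : (Fin n → Bool) → ℝ := fun x => gEval b (ovr ρ x) with hh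
  have htR : ∀ x, |toRealFn g x| ≤ 1 := by
    intro x; unfold toRealFn; split <;> norm_num
  have hb4 : ∀ x, |h x| ≤ 4/3 := by
    intro x
    calc |h x| = |(h x - toRealFn g x) + toRealFn g x| := by ring_nf
      _ ≤ |h x - toRealFn g x| + |toRealFn g x| := abs_add_le _ _
      _ ≤ 1/3 + 1 := add_le_add (happ x) (htR x)
      _ = 4/3 := by norm_num
  set P2 : Polynomial ℝ := ∑ S ∈ F.powerset,
    C (h (bflip x₀ S)) * (X ^ S.card * (1 - X) ^ (m - S.card)) with hP2
  have hP2eval : ∀ τ : ℝ, P2.eval τ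
      = ∑ S ∈ F.powerset, (τ ^ S.card * (1 - τ) ^ (m - S.card)) * h (bflip x₀ S) := by
    intro τ
    rw [hP2, eval_finset_sum]
    refine Finset.sum_congr rfl fun S hS => ?_
    simp only [eval_mul, eval_C, eval_pow, eval_sub, eval_one, eval_X]
    ring
  set P1 : Polynomial ℝ := ∑ p : Finset (Fin n) × Finset (Fin n),
    C (b p) * ((∏ i ∈ p.1, vtp ρ x₀ i) * ∏ j ∈ p.2, (1 - vtp ρ x₀ j)) with hP1
  have hP1eval : ∀ τ : ℝ, P1.eval τ = P2.eval τ := by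
    intro τ
    rw [hP2eval τ, hP1, eval_finset_sum]
    have step1 : ∀ p : Finset (Fin n) × Finset (Fin n),
        eval τ (C (b p) * ((∏ i ∈ p.1, vtp ρ x₀ i) * ∏ j ∈ p.2, (1 - vtp ρ x₀ j)))
        = b p * ((∏ i ∈ p.1, (vtp ρ x₀ i).eval τ) * ∏ j ∈ p.2, (1 - (vtp ρ x₀ j).eval τ)) := by
      intro p
      simp only [eval_mul, eval_C, eval_prod, eval_sub, eval_one]
    rw [Finset.sum_congr rfl fun p _ => step1 p]
    have step2 : ∀ p : Finset (Fin n) × Finset (Fin n),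
        b p * ((∏ i ∈ p.1, (vtp ρ x₀ i).eval τ) * ∏ j ∈ p.2, (1 - (vtp ρ x₀ j).eval τ))
        = ∑ S ∈ F.powerset, (τ ^ S.card * (1 - τ) ^ (m - S.card))
            * (b p * ((∏ i ∈ p.1, (if ovr ρ (bflip x₀ S) i then (1:ℝ) else 0))
              * ∏ j ∈ p.2, (if ovr ρ (bflip x₀ S) j then (0:ℝ) else 1))) := by
      intro p
      by_cases hbp : b p = 0
      · simp [hbp]
      · rw [← claimp ρ x₀ p.1 p.2 (hdisj p hbp) τ, Finset.mul_sum]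
        refine Finset.sum_congr rfl fun S hS => ?_
        ring
    rw [Finset.sum_congr rfl fun p _ => step2 p, Finset.sum_comm]
    refine Finset.sum_congr rfl fun S hS => ?_
    have : h (bflip x₀ S) = ∑ p : Finset (Fin n) × Finset (Fin n),
        b p * (∏ i ∈ p.1, (if ovr ρ (bflip x₀ S) i then (1:ℝ) else 0))
          * ∏ j ∈ p.2, (if ovr ρ (bflip x₀ S) j then (0:ℝ) else 1) := rfl
    rw [this, Finset.mul_sum]
    refine Finset.sum_congr rfl fun p _ => ?_
    ring
  have hP12 : P1 = P2 := Polynomial.funext hP1eval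
  -- degree bound
  have hdegP2 : P2.natDegree ≤ Dd := by
    rw [← hP12, hP1]
    refine Polynomial.natDegree_sum_le_of_forall_le _ _ fun p _ => ?_
    by_cases hbp : b p = 0
    · rw [hbp, map_zero, zero_mul, natDegree_zero]
      omega
    · have hd := hdeg p hbp
      unfold gMonRestDeg at hd
      by_cases hkill : (∃ i ∈ p.1, ρ i = some false) ∨ (∃ j ∈ p.2, ρ j = some true)
      · rcases hkill with ⟨i, hip, hif⟩ | ⟨j, hjn, hjt⟩
        · have hz : vtp ρ x₀ i = 0 := by
            unfold vtp
            rw [if_neg (by simp [hif]), hif]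
            simp
          rw [Finset.prod_eq_zero hip hz, zero_mul, mul_zero, natDegree_zero]
          omega
        · have hz : (1:Polynomial ℝ) - vtp ρ x₀ j = 0 := by
            unfold vtp
            rw [if_neg (by simp [hjt]), hjt]
            simp
          rw [Finset.prod_eq_zero hjn hz, mul_zero, mul_zero, natDegree_zero]
          omega
      · rw [if_neg hkill] at hd
        refine le_trans natDegree_mul_le ?_
        rw [natDegree_C, zero_add]
        refine le_trans natDegree_mul_le ?_
        have h1 : (∏ i ∈ p.1, vtp ρ x₀ i).natDegree
            ≤ (p.1.filter (fun i => ρ i = none)).card := by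
          refine le_trans (natDegree_prod_le _ _) ?_
          calc ∑ i ∈ p.1, (vtp ρ x₀ i).natDegree
              ≤ ∑ i ∈ p.1, (if ρ i = none then 1 else 0) :=
                Finset.sum_le_sum fun i _ => vtp_natDegree ρ x₀ i
            _ = (p.1.filter (fun i => ρ i = none)).card := by
                rw [Finset.card_filter]
        have h2 : (∏ j ∈ p.2, ((1:Polynomial ℝ) - vtp ρ x₀ j)).natDegree
            ≤ (p.2.filter (fun i => ρ i = none)).card := by
          refine le_trans (natDegree_prod_le _ _) ?_
          calc ∑ j ∈ p.2, ((1:Polynomial ℝ) - vtp ρ x₀ j).natDegree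
              ≤ ∑ j ∈ p.2, (if ρ j = none then 1 else 0) :=
                Finset.sum_le_sum fun j _ => one_sub_vtp_natDegree ρ x₀ j
            _ = (p.2.filter (fun i => ρ i = none)).card := by
                rw [Finset.card_filter]
        have h3 : (p.1.filter (fun i => ρ i = none)).card
            + (p.2.filter (fun i => ρ i = none)).card
            = ((p.1 ∪ p.2).filter (fun i => ρ i = none)).card := by
          rw [Finset.filter_union]
          rw [Finset.card_union_of_disjoint]
          exact Finset.disjoint_filter_filter (hdisj p hbp)
        omega
  -- boundedness on [0,1]
  have hbound01 : ∀ τ : ℝ, 0 ≤ τ → τ ≤ 1 → |P2.eval τ| ≤ 4/3 := by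
    intro τ h0 h1
    rw [hP2eval τ]
    have hwnn : ∀ S ∈ F.powerset, 0 ≤ τ ^ S.card * (1 - τ) ^ (m - S.card) := by
      intro S _
      have : (0:ℝ) ≤ 1 - τ := by linarith
      positivity
    calc |∑ S ∈ F.powerset, (τ ^ S.card * (1 - τ) ^ (m - S.card)) * h (bflip x₀ S)|
        ≤ ∑ S ∈ F.powerset, |(τ ^ S.card * (1 - τ) ^ (m - S.card)) * h (bflip x₀ S)| :=
          Finset.abs_sum_le_sum_abs _ _
      _ ≤ ∑ S ∈ F.powerset, (τ ^ S.card * (1 - τ) ^ (m - S.card)) * (4/3) := by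
          refine Finset.sum_le_sum fun S hS => ?_
          rw [abs_mul, abs_of_nonneg (hwnn S hS)]
          exact mul_le_mul_of_nonneg_left (hb4 _) (hwnn S hS)
      _ = (∑ S ∈ F.powerset, τ ^ S.card * (1 - τ) ^ (m - S.card)) * (4/3) := by
          rw [← Finset.sum_mul]
      _ = 4/3 := by rw [weight_sum]; norm_num
  -- apply Markov through the affine change of variables
  set qc : Polynomial ℝ := C (1/2) - C (1/2) * X with hqc
  set r : Polynomial ℝ := P2.comp qc with hr
  have hqceval : ∀ x : ℝ, qc.eval x = 1/2 - x/2 := by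
    intro x; rw [hqc]; simp; ring
  have hrdeg : r.natDegree ≤ Dd := by
    refine le_trans (natDegree_comp_le) ?_
    have hq1 : qc.natDegree ≤ 1 := by
      rw [hqc]
      refine le_trans (natDegree_sub_le _ _) ?_
      have hcx : ((C (1/2:ℝ)) * X).natDegree ≤ 1 := le_trans natDegree_mul_le (by simp)
      simp only [natDegree_C]
      omega
    calc P2.natDegree * qc.natDegree ≤ Dd * 1 := Nat.mul_le_mul hdegP2 hq1
      _ = Dd := by omega
  have hrbound : ∀ x : ℝ, -1 ≤ x → x ≤ 1 → |r.eval x| ≤ 4/3 := by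
    intro x hx1 hx2
    rw [hr, eval_comp, hqceval]
    exact hbound01 _ (by linarith) (by linarith)
  have hmx := markov_endpoint Dd hD r hrdeg (4/3) hrbound
  have hdc : (derivative r).eval 1 = -(1/2) * (derivative P2).eval 0 := by
    rw [hr, Polynomial.derivative_comp, eval_mul, eval_comp, hqceval]
    have : (1:ℝ)/2 - 1/2 = 0 := by norm_num
    rw [this]
    have hdq : derivative qc = -C (1/2) := by
      rw [hqc, derivative_sub, derivative_C, derivative_C_mul, derivative_X]
      simp
    rw [hdq]
    simp
  have hub : |(derivative P2).eval 0| ≤ 8/3 * (Dd:ℝ)^2 := by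
    have h2 : |(derivative r).eval 1| = (1/2) * |(derivative P2).eval 0| := by
      rw [hdc, abs_mul]
      norm_num
    rw [h2] at hmx
    linarith
  -- coefficient extraction
  have hcoeff : (derivative P2).eval 0
      = (∑ i ∈ F, h (bflip x₀ {i})) - (m:ℝ) * h (bflip x₀ ∅) := by
    rw [hP2, derivative_sum, eval_finset_sum]
    have hterm : ∀ S ∈ F.powerset,
        eval 0 (derivative (C (h (bflip x₀ S)) * (X ^ S.card * (1 - X) ^ (m - S.card))))
        = (if S = (∅ : Finset (Fin n)) then -(m:ℝ) * h (bflip x₀ S) else 0)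
          + (if S.card = 1 then h (bflip x₀ S) else 0) := by
      intro S hS
      rw [derivative_C_mul, eval_mul, eval_C, dxa]
      by_cases hS0 : S = ∅
      · subst hS0
        simp [mul_comm]
      · have hc0 : S.card ≠ 0 := by
          simpa [Finset.card_eq_zero] using hS0
        rw [if_neg hS0, if_neg hc0]
        by_cases hc1 : S.card = 1
        · rw [if_pos hc1, if_pos hc1]
          ring
        · rw [if_neg hc1, if_neg hc1]
          ring
    rw [Finset.sum_congr rfl hterm, Finset.sum_add_distrib]
    have hA : ∑ S ∈ F.powerset, (if S = (∅ : Finset (Fin n)) then -(m:ℝ) * h (bflip x₀ S) else 0)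
        = -(m:ℝ) * h (bflip x₀ ∅) := by
      rw [Finset.sum_ite_eq' F.powerset (∅ : Finset (Fin n))
        (fun S => -(m:ℝ) * h (bflip x₀ S))]
      rw [if_pos (Finset.empty_mem_powerset F)]
    have hB : ∑ S ∈ F.powerset, (if S.card = 1 then h (bflip x₀ S) else 0)
        = ∑ i ∈ F, h (bflip x₀ {i}) := by
      rw [← Finset.sum_filter, ← Finset.powersetCard_eq_filter, Finset.powersetCard_one,
        Finset.sum_map]
      rfl
    rw [hA, hB]
    ring
  have hflip0 : bflip x₀ (∅ : Finset (Fin n)) = x₀ := by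
    funext i; simp [bflip]
  have hflipi : ∀ i : Fin n, bflip x₀ {i} = Function.update x₀ i (!(x₀ i)) := by
    intro i
    funext j
    by_cases hj : j = i
    · subst hj; simp [bflip, Function.update_apply]
    · simp [bflip, hj, Function.update_apply]
  -- lower bound on the derivative
  have hlow : (m:ℝ)/3 ≤ |(derivative P2).eval 0| := by
    have hx0 := happ x₀
    cases hgx : g x₀
    · -- g x₀ = false
      have hx0' : |h x₀ - 0| ≤ 1/3 := by
        have : toRealFn g x₀ = 0 := by simp [toRealFn, hgx]
        rwa [this] at hx0
      have hx0le : h x₀ ≤ 1/3 := by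
        rw [sub_zero] at hx0'
        exact le_trans (le_abs_self _) hx0'
      have hup : ∀ i ∈ F, (2:ℝ)/3 ≤ h (bflip x₀ {i}) := by
        intro i hi
        have hgi : g (Function.update x₀ i (!(x₀ i))) = true := by
          have := hsens i hi
          rw [hgx] at this
          simpa using this
        have := happ (bflip x₀ {i})
        have hT1 : toRealFn g (bflip x₀ {i}) = 1 := by
          unfold toRealFn
          rw [hflipi i, hgi]
          simp
        rw [hT1] at this
        have := abs_le.mp this
        linarith [this.1]
      have hsum : (m:ℝ) * (2/3) ≤ ∑ i ∈ F, h (bflip x₀ {i}) := by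
        calc (m:ℝ) * (2/3) = ∑ _i ∈ F, (2:ℝ)/3 := by
              rw [Finset.sum_const, nsmul_eq_mul, hm]
              try ring
          _ ≤ ∑ i ∈ F, h (bflip x₀ {i}) := Finset.sum_le_sum hup
      have : (m:ℝ)/3 ≤ (derivative P2).eval 0 := by
        rw [hcoeff, hflip0]
        have hmnn : (0:ℝ) ≤ (m:ℝ) := Nat.cast_nonneg m
        nlinarith
      exact le_trans this (le_abs_self _)
    · -- g x₀ = true
      have hx0' : |h x₀ - 1| ≤ 1/3 := by
        have : toRealFn g x₀ = 1 := by simp [toRealFn, hgx]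
        rwa [this] at hx0
      have hx0ge : (2:ℝ)/3 ≤ h x₀ := by
        have := abs_le.mp hx0'
        linarith [this.1]
      have hup : ∀ i ∈ F, h (bflip x₀ {i}) ≤ 1/3 := by
        intro i hi
        have hgi : g (Function.update x₀ i (!(x₀ i))) = false := by
          have := hsens i hi
          rw [hgx] at this
          simpa using this
        have happi := happ (bflip x₀ {i})
        have hT0 : toRealFn g (bflip x₀ {i}) = 0 := by
          unfold toRealFn
          rw [hflipi i, hgi]
          simp
        rw [hT0, sub_zero] at happi
        exact le_trans (le_abs_self _) happi
      have hsum : ∑ i ∈ F, h (bflip x₀ {i}) ≤ (m:ℝ) * (1/3) := by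
        calc ∑ i ∈ F, h (bflip x₀ {i}) ≤ ∑ _i ∈ F, (1:ℝ)/3 := Finset.sum_le_sum hup
          _ = (m:ℝ) * (1/3) := by
              rw [Finset.sum_const, nsmul_eq_mul, hm]
              try ring
      have hneg : (derivative P2).eval 0 ≤ -((m:ℝ)/3) := by
        rw [hcoeff, hflip0]
        have hmnn : (0:ℝ) ≤ (m:ℝ) := Nat.cast_nonneg m
        nlinarith
      calc (m:ℝ)/3 ≤ -((derivative P2).eval 0) := by linarith
        _ ≤ |(derivative P2).eval 0| := neg_le_abs _
  have : (m:ℝ)/3 ≤ 8/3 * (Dd:ℝ)^2 := le_trans hlow hub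
  rw [hm] at *
  linarith

lemma ind_prod {n : ℕ} (x : Fin n → Bool) (P : Finset (Fin n)) :
    (∏ i ∈ P, (if x i then (1:ℝ) else 0)) * (∏ j ∈ Pᶜ, (if x j then (0:ℝ) else 1))
      = if P = Finset.univ.filter (fun i => x i = true) then 1 else 0 := by
  classical
  by_cases hP : P = Finset.univ.filter (fun i => x i = true)
  · rw [if_pos hP]
    have h1 : ∏ i ∈ P, (if x i then (1:ℝ) else 0) = 1 := by
      refine Finset.prod_eq_one fun i hi => ?_
      rw [hP, Finset.mem_filter] at hi
      rw [if_pos hi.2]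
    have h2 : ∏ j ∈ Pᶜ, (if x j then (0:ℝ) else 1) = 1 := by
      refine Finset.prod_eq_one fun j hj => ?_
      rw [Finset.mem_compl, hP, Finset.mem_filter] at hj
      have : ¬ (x j = true) := fun hc => hj ⟨Finset.mem_univ _, hc⟩
      rw [if_neg this]
    rw [h1, h2]; norm_num
  · rw [if_neg hP]
    have hex : ∃ i, (i ∈ P ∧ x i ≠ true) ∨ (i ∈ Pᶜ ∧ x i = true) := by
      by_contra hc
      push_neg at hc
      apply hP
      ext i
      rw [Finset.mem_filter]
      constructor
      · intro hi
        exact ⟨Finset.mem_univ _, by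
          by_contra hxi
          exact hxi ((hc i).1 hi)⟩
      · intro hi
        by_contra hiP
        exact ((hc i).2 (Finset.mem_compl.mpr hiP)) hi.2
    rcases hex with ⟨i, ⟨hiP, hxi⟩ | ⟨hiC, hxi⟩⟩
    · rw [Finset.prod_eq_zero hiP (by rw [if_neg (by simpa using hxi)]), zero_mul]
    · rw [Finset.prod_eq_zero hiC (by rw [if_pos hxi]), mul_zero]

lemma gEval_exact {n : ℕ} (f : (Fin n → Bool) → Bool) (x : Fin n → Bool) :
    gEval (fun p : Finset (Fin n) × Finset (Fin n) =>
        if p.2 = p.1ᶜ then toRealFn f (fun i => decide (i ∈ p.1)) else 0) x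
      = toRealFn f x := by
  classical
  unfold gEval
  rw [Fintype.sum_prod_type]
  have hQ : ∀ P : Finset (Fin n),
      (∑ Q : Finset (Fin n),
        (if Q = Pᶜ then toRealFn f (fun i => decide (i ∈ P)) else 0)
          * (∏ i ∈ P, (if x i then (1:ℝ) else 0)) * (∏ j ∈ Q, (if x j then (0:ℝ) else 1)))
      = toRealFn f (fun i => decide (i ∈ P))
          * ((∏ i ∈ P, (if x i then (1:ℝ) else 0)) * (∏ j ∈ Pᶜ, (if x j then (0:ℝ) else 1))) := by
    intro P
    rw [Finset.sum_congr rfl (fun Q _ => show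
        (if Q = Pᶜ then toRealFn f (fun i => decide (i ∈ P)) else 0)
          * (∏ i ∈ P, (if x i then (1:ℝ) else 0)) * (∏ j ∈ Q, (if x j then (0:ℝ) else 1))
        = (if Q = Pᶜ then toRealFn f (fun i => decide (i ∈ P))
            * ((∏ i ∈ P, (if x i then (1:ℝ) else 0)) * (∏ j ∈ Q, (if x j then (0:ℝ) else 1)))
          else 0) from by
      by_cases hQP : Q = Pᶜ
      · rw [if_pos hQP, if_pos hQP]; ring
      · rw [if_neg hQP, if_neg hQP, zero_mul, zero_mul])]
    rw [Finset.sum_ite_eq' Finset.univ (Pᶜ)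
      (fun Q => toRealFn f (fun i => decide (i ∈ P))
        * ((∏ i ∈ P, (if x i then (1:ℝ) else 0)) * (∏ j ∈ Q, (if x j then (0:ℝ) else 1))))]
    rw [if_pos (Finset.mem_univ _)]
  rw [Finset.sum_congr rfl fun P _ => hQ P]
  rw [Finset.sum_congr rfl (fun P _ => by rw [ind_prod x P])]
  rw [Finset.sum_congr rfl (fun P (_ : P ∈ Finset.univ) => show
      toRealFn f (fun i => decide (i ∈ P))
        * (if P = Finset.univ.filter (fun i => x i = true) then (1:ℝ) else 0)
      = (if P = Finset.univ.filter (fun i => x i = true)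
          then toRealFn f (fun i => decide (i ∈ P)) else 0) from by
    by_cases hP : P = Finset.univ.filter (fun i => x i = true)
    · rw [if_pos hP, if_pos hP, mul_one]
    · rw [if_neg hP, if_neg hP, mul_zero])]
  rw [Finset.sum_ite_eq' Finset.univ (Finset.univ.filter (fun i => x i = true))
    (fun P => toRealFn f (fun i => decide (i ∈ P)))]
  rw [if_pos (Finset.mem_univ _)]
  congr 1
  funext i
  simp

lemma sum_union_le_nonneg {α : Type*} [DecidableEq α] (s t : Finset α) (f : α → ℝ)
    (hf : ∀ a, 0 ≤ f a) :
    ∑ x ∈ s ∪ t, f x ≤ (∑ x ∈ s, f x) + ∑ x ∈ t, f x := by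
  have h1 := Finset.sum_union_inter (s₁ := s) (s₂ := t) (f := f)
  have h2 : 0 ≤ ∑ x ∈ s ∩ t, f x := Finset.sum_nonneg fun a _ => hf a
  linarith

lemma prOf_eq_sum_ind {n : ℕ} (D : (Fin n → Option Bool) → ℝ)
    (E : (Fin n → Option Bool) → Prop) :
    prOf D E = ∑ ρ : (Fin n → Option Bool), Set.indicator {ρ' | E ρ'} D ρ := by
  unfold prOf
  rw [Finset.sum_filter]
  refine Finset.sum_congr rfl fun ρ _ => ?_
  by_cases hE : E ρ <;>
    simp [Set.indicator_apply, Set.mem_setOf_eq, hE]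

lemma ind_D_nonneg {n : ℕ} {D : (Fin n → Option Bool) → ℝ} (hDnn : ∀ ρ, 0 ≤ D ρ)
    (s : Set (Fin n → Option Bool)) (ρ : Fin n → Option Bool) :
    0 ≤ Set.indicator s D ρ :=
  Set.indicator_nonneg (fun a _ => hDnn a) ρ

lemma union_bound_aux {n : ℕ} (D : (Fin n → Option Bool) → ℝ) (hDnn : ∀ ρ, 0 ≤ D ρ)
    (T : Finset (Finset (Fin n) × Finset (Fin n)))
    (B : (Finset (Fin n) × Finset (Fin n)) → (Fin n → Option Bool) → Prop) :
    prOf D (fun ρ => ∃ p ∈ T, B p ρ) ≤ ∑ p ∈ T, prOf D (B p) := by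
  classical
  rw [prOf_eq_sum_ind]
  have step : ∀ ρ, Set.indicator {ρ' | ∃ p ∈ T, B p ρ'} D ρ
      ≤ ∑ p ∈ T, Set.indicator {ρ' | B p ρ'} D ρ := by
    intro ρ
    by_cases hE : ∃ p ∈ T, B p ρ
    · rw [Set.indicator_of_mem (by exact hE) D]
      obtain ⟨p₀, hp₀, hB⟩ := hE
      have hs := Finset.single_le_sum (f := fun p => Set.indicator {ρ' | B p ρ'} D ρ)
        (fun p _ => ind_D_nonneg hDnn _ ρ) hp₀
      rwa [Set.indicator_of_mem (by exact hB) D] at hs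
    · rw [Set.indicator_of_notMem (by exact hE) D]
      exact Finset.sum_nonneg fun p _ => ind_D_nonneg hDnn _ ρ
  calc ∑ ρ : (Fin n → Option Bool), Set.indicator {ρ' | ∃ p ∈ T, B p ρ'} D ρ
      ≤ ∑ ρ : (Fin n → Option Bool), ∑ p ∈ T, Set.indicator {ρ' | B p ρ'} D ρ :=
        Finset.sum_le_sum fun ρ _ => step ρ
    _ = ∑ p ∈ T, ∑ ρ : (Fin n → Option Bool), Set.indicator {ρ' | B p ρ'} D ρ :=
        Finset.sum_comm
    _ = ∑ p ∈ T, prOf D (B p) :=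
        Finset.sum_congr rfl fun p _ => (prOf_eq_sum_ind D (B p)).symm

lemma prOf_le_of_zero {n : ℕ} (D : (Fin n → Option Bool) → ℝ) (hDnn : ∀ ρ, 0 ≤ D ρ)
    {E F : (Fin n → Option Bool) → Prop} (h : ∀ ρ, D ρ ≠ 0 → E ρ → F ρ) :
    prOf D E ≤ prOf D F := by
  classical
  rw [prOf_eq_sum_ind, prOf_eq_sum_ind]
  refine Finset.sum_le_sum fun ρ _ => ?_
  by_cases hE : E ρ
  · rw [Set.indicator_of_mem (by exact hE) D]
    by_cases hD : D ρ = 0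
    · rw [hD]
      exact ind_D_nonneg hDnn _ ρ
    · rw [Set.indicator_of_mem (by exact h ρ hD hE) D]
  · rw [Set.indicator_of_notMem (by exact hE) D]
    exact ind_D_nonneg hDnn _ ρ

lemma exists_good_rho {n : ℕ} (D : (Fin n → Option Bool) → ℝ) (hDnn : ∀ ρ, 0 ≤ D ρ)
    (ℓ : ℕ) (hA : (0.9:ℝ) ≤ prOf D (fun ρ => ℓ ≤ (freeVars ρ).card))
    (T : Finset (Finset (Fin n) × Finset (Fin n))) (t : ℕ)
    (hB : ∀ p ∈ T, prOf D (fun ρ => t ≤ gMonRestDeg ρ p.1 p.2) ≤ (1/2:ℝ)^t)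
    (hcard : (T.card : ℝ) * (1/2)^t ≤ 1/2) :
    ∃ ρ, D ρ ≠ 0 ∧ ℓ ≤ (freeVars ρ).card ∧ ∀ p ∈ T, gMonRestDeg ρ p.1 p.2 < t := by
  classical
  by_contra hc
  push_neg at hc
  have hc' : ∀ ρ, D ρ ≠ 0 → ℓ ≤ (freeVars ρ).card → ∃ p ∈ T, t ≤ gMonRestDeg ρ p.1 p.2 := by
    intro ρ h1 h2
    obtain ⟨p, hp, hdeg⟩ := hc ρ h1 h2
    exact ⟨p, hp, hdeg⟩
  have h1 : prOf D (fun ρ => ℓ ≤ (freeVars ρ).card)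
      ≤ prOf D (fun ρ => ∃ p ∈ T, t ≤ gMonRestDeg ρ p.1 p.2) :=
    prOf_le_of_zero D hDnn hc'
  have h2 : prOf D (fun ρ => ∃ p ∈ T, t ≤ gMonRestDeg ρ p.1 p.2)
      ≤ ∑ p ∈ T, prOf D (fun ρ => t ≤ gMonRestDeg ρ p.1 p.2) :=
    union_bound_aux D hDnn T _
  have h3 : ∑ p ∈ T, prOf D (fun ρ => t ≤ gMonRestDeg ρ p.1 p.2) ≤ (T.card : ℝ) * (1/2)^t := by
    calc ∑ p ∈ T, prOf D (fun ρ => t ≤ gMonRestDeg ρ p.1 p.2)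
        ≤ ∑ _p ∈ T, ((1/2:ℝ))^t := Finset.sum_le_sum hB
      _ = (T.card : ℝ) * (1/2)^t := by rw [Finset.sum_const, nsmul_eq_mul]
  linarith

lemma sensF_subset_free {n : ℕ} (f : (Fin n → Bool) → Bool) (ρ : Fin n → Option Bool)
    (x : Fin n → Bool) : sensF (restrictFn f ρ) x ⊆ freeVars ρ := by
  intro i hi
  rw [sensF, Finset.mem_filter] at hi
  rw [freeVars, Finset.mem_filter]
  refine ⟨Finset.mem_univ _, ?_⟩
  by_contra hρ
  obtain ⟨v, hv⟩ := Option.ne_none_iff_exists'.mp hρ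
  apply hi.2
  unfold restrictFn
  congr 1
  funext j
  by_cases hj : j = i
  · subst hj
    rw [hv]
    simp
  · simp [Function.update_apply, hj]

end Stmt18Aux

/-- If `f` admits an `ℓ`-variable max-sensitivity distribution over restrictions, then
`log (approximate generalized sparsity of f) = Ω(√ℓ)`. -/
theorem stmt18 :
    ∃ c : ℝ, 0 < c ∧ ∃ C : ℝ, 0 ≤ C ∧
      ∀ (n ℓ : ℕ) (f : (Fin n → Bool) → Bool) (D : (Fin n → Option Bool) → ℝ),
        (∀ ρ, 0 ≤ D ρ) → (∑ ρ : Fin n → Option Bool, D ρ) = 1 →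
        (0.9 : ℝ) ≤ prOf D (fun ρ => ℓ ≤ (freeVars ρ).card) →
        (∀ ρ, D ρ ≠ 0 →
          (∀ x, (sensF (restrictFn f ρ) x).card ≤ (freeVars ρ).card) ∧
          (∃ x, (sensF (restrictFn f ρ) x).card = (freeVars ρ).card)) →
        (∀ P N : Finset (Fin n), Disjoint P N → ∀ t : ℕ,
          prOf D (fun ρ => t ≤ gMonRestDeg ρ P N) ≤ (1 / 2 : ℝ) ^ t) →
        c * Real.sqrt ℓ - C ≤ Real.log (gasparsity f) := by
  classical
  refine ⟨Real.log 2 / Real.sqrt 8,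
    div_pos (Real.log_pos (by norm_num)) (Real.sqrt_pos.mpr (by norm_num)),
    Real.log 2, Real.log_nonneg (by norm_num), ?_⟩
  intro n ℓ f D hDnn hDsum hA hsensD hmon
  have hlognn : (0:ℝ) ≤ Real.log (gasparsity f) := by
    rcases Nat.eq_zero_or_pos (gasparsity f) with h0 | hpos
    · rw [h0]
      simp
    · exact Real.log_nonneg (by exact_mod_cast hpos)
  by_cases hl0 : ℓ = 0
  · subst hl0
    simp only [Nat.cast_zero, Real.sqrt_zero, mul_zero, zero_sub]
    linarith [Real.log_nonneg (one_le_two (α := ℝ))]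
  -- ℓ ≥ 1 from here on
  have hl1 : 1 ≤ ℓ := by omega
  -- there is some ρ in the support with many free variables
  have hexρ0 : ∃ ρ, D ρ ≠ 0 ∧ ℓ ≤ (freeVars ρ).card := by
    by_contra hco
    push_neg at hco
    have : prOf D (fun ρ => ℓ ≤ (freeVars ρ).card) ≤ prOf D (fun _ => False) :=
      prOf_le_of_zero D hDnn (fun ρ hD hℓ => absurd hℓ (not_le.mpr (hco ρ hD)))
    have hz : prOf D (fun _ : (Fin n → Option Bool) => False) = 0 := by
      unfold prOf
      rw [Finset.filter_false]
      exact Finset.sum_empty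
    rw [hz] at this
    norm_num at this hA
    linarith
  -- the gasparsity set is nonempty
  set SET := {s : ℕ | ∃ b : Finset (Fin n) × Finset (Fin n) → ℝ,
    (∀ p, b p ≠ 0 → Disjoint p.1 p.2) ∧
    (∀ x, |gEval b x - toRealFn f x| ≤ 1 / 3) ∧
    ((Finset.univ : Finset (Finset (Fin n) × Finset (Fin n))).filter
        (fun p => b p ≠ 0)).card ≤ s} with hSET
  have hne : SET.Nonempty := by
    refine ⟨((Finset.univ : Finset (Finset (Fin n) × Finset (Fin n))).filter
      (fun p => (if p.2 = p.1ᶜ then toRealFn f (fun i => decide (i ∈ p.1)) else 0) ≠ 0)).card,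
      (fun p : Finset (Fin n) × Finset (Fin n) =>
        if p.2 = p.1ᶜ then toRealFn f (fun i => decide (i ∈ p.1)) else 0), ?_, ?_, le_refl _⟩
    · intro p hp
      simp only [] at hp
      by_cases hpc : p.2 = p.1ᶜ
      · rw [hpc]
        exact disjoint_compl_right
      · rw [if_neg hpc] at hp
        exact absurd rfl hp
    · intro x
      rw [gEval_exact f x]
      simp
  have hmem : gasparsity f ∈ SET := Nat.sInf_mem hne
  obtain ⟨b, hdisj, happrox, hcardb⟩ := hmem
  set sf := gasparsity f with hsf
  -- case sf = 0 : f is constantly false, contradiction with sensitivity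
  rcases Nat.eq_zero_or_pos sf with hsf0 | hsfpos
  · exfalso
    have hTempty : (Finset.univ : Finset (Finset (Fin n) × Finset (Fin n))).filter
        (fun p => b p ≠ 0) = ∅ := by
      rw [← Finset.card_eq_zero]
      omega
    have hb0 : ∀ p : Finset (Fin n) × Finset (Fin n), b p = 0 := by
      intro p
      by_contra hp
      have hmem2 : p ∈ (Finset.univ : Finset (Finset (Fin n) × Finset (Fin n))).filter
          (fun p => b p ≠ 0) := Finset.mem_filter.mpr ⟨Finset.mem_univ _, hp⟩
      rw [hTempty] at hmem2
      exact absurd hmem2 (Finset.notMem_empty p)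
    have hfx : ∀ x, f x = false := by
      intro x
      have happx := happrox x
      have hge : gEval b x = 0 := by
        unfold gEval
        exact Finset.sum_eq_zero fun p _ => by rw [hb0 p, zero_mul, zero_mul]
      rw [hge] at happx
      by_contra hft
      have hft' : f x = true := by
        cases hfx : f x
        · exact absurd hfx hft
        · rfl
      have : toRealFn f x = 1 := by simp [toRealFn, hft']
      rw [this] at happx
      norm_num at happx
    obtain ⟨ρ, hρD, hρℓ⟩ := hexρ0
    obtain ⟨_, x₀, hx₀⟩ := hsensD ρ hρD
    have hsens0 : sensF (restrictFn f ρ) x₀ = ∅ := by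
      rw [sensF]
      refine Finset.filter_false_of_mem fun x _ => ?_
      unfold restrictFn
      rw [hfx, hfx]
      simp
    rw [hsens0] at hx₀
    simp only [Finset.card_empty] at hx₀
    omega
  -- main case
  set L := Nat.log 2 sf with hL
  set t := L + 2 with ht
  set T := (Finset.univ : Finset (Finset (Fin n) × Finset (Fin n))).filter
    (fun p => b p ≠ 0) with hT
  have hBp : ∀ p ∈ T, prOf D (fun ρ => t ≤ gMonRestDeg ρ p.1 p.2) ≤ (1/2:ℝ)^t := by
    intro p hp
    exact hmon p.1 p.2 (hdisj p (Finset.mem_filter.mp hp).2) t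
  have hcardT : (T.card : ℝ) * (1/2)^t ≤ 1/2 := by
    have hslt : sf < 2^(L+1) := Nat.lt_pow_succ_log_self (by norm_num) sf
    have hTs : (T.card : ℝ) ≤ (2:ℝ)^(L+1) := by
      have h1 : T.card ≤ sf := hcardb
      have h2 : (T.card : ℝ) ≤ (sf : ℝ) := by exact_mod_cast h1
      have h3 : (sf:ℝ) ≤ (2:ℝ)^(L+1) := by
        have : ((sf:ℕ):ℝ) ≤ ((2^(L+1) : ℕ):ℝ) := by exact_mod_cast Nat.le_of_lt hslt
        rwa [Nat.cast_pow, Nat.cast_ofNat] at this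
      linarith
    have hkey : (2:ℝ)^(L+1) * (1/2)^(L+2) = 1/2 := by
      calc (2:ℝ)^(L+1) * (1/2)^(L+2)
          = ((2:ℝ)*(1/2))^(L+1) * (1/2) := by rw [mul_pow, pow_succ]; ring
        _ = 1/2 := by norm_num
    have hp2 : (0:ℝ) ≤ (1/2:ℝ)^t := by positivity
    calc (T.card : ℝ) * (1/2)^t ≤ (2:ℝ)^(L+1) * (1/2)^t :=
          mul_le_mul_of_nonneg_right hTs hp2
      _ = 1/2 := by rw [ht, hkey]
  obtain ⟨ρ, hρD, hρℓ, hρdeg⟩ := exists_good_rho D hDnn ℓ hA T t hBp hcardT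
  obtain ⟨hsub, x₀, hx₀⟩ := hsensD ρ hρD
  have hSF : sensF (restrictFn f ρ) x₀ = freeVars ρ :=
    Finset.eq_of_subset_of_card_le (sensF_subset_free f ρ x₀) (le_of_eq hx₀.symm)
  have hsens' : ∀ i ∈ freeVars ρ,
      restrictFn f ρ (Function.update x₀ i (!(x₀ i))) ≠ restrictFn f ρ x₀ := by
    intro i hi
    have : i ∈ sensF (restrictFn f ρ) x₀ := hSF ▸ hi
    exact (Finset.mem_filter.mp this).2
  have happ' : ∀ x, |gEval b (ovr ρ x) - toRealFn (restrictFn f ρ) x| ≤ 1/3 := by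
    intro x
    exact happrox (ovr ρ x)
  have hdeg' : ∀ p : Finset (Fin n) × Finset (Fin n), b p ≠ 0 →
      gMonRestDeg ρ p.1 p.2 ≤ L + 1 := by
    intro p hp
    have := hρdeg p (Finset.mem_filter.mpr ⟨Finset.mem_univ _, hp⟩)
    omega
  have hcore := core_bound ρ x₀ (restrictFn f ρ) b (L+1) (by omega) hdisj hdeg' happ' hsens'
  have hℓm : (ℓ:ℝ) ≤ 8*(((L:ℝ))+1)^2 := by
    have h1 : (ℓ:ℝ) ≤ ((freeVars ρ).card : ℝ) := by exact_mod_cast hρℓ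
    have h2 : (((L+1 : ℕ)):ℝ) = (L:ℝ)+1 := by push_cast; ring
    rw [← h2]
    exact le_trans h1 hcore
  have hsq : Real.sqrt ℓ ≤ Real.sqrt 8 * ((L:ℝ)+1) := by
    have hstep : Real.sqrt ℓ ≤ Real.sqrt (8*((L:ℝ)+1)^2) := Real.sqrt_le_sqrt hℓm
    rwa [Real.sqrt_mul (by norm_num : (0:ℝ) ≤ 8), Real.sqrt_sq (by positivity)] at hstep
  have hlog : (L:ℝ) * Real.log 2 ≤ Real.log sf := by
    have h2L : ((2:ℝ))^L ≤ (sf:ℝ) := by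
      have := Nat.pow_log_le_self 2 (by omega : sf ≠ 0)
      have h' : ((2^L : ℕ):ℝ) ≤ (sf:ℝ) := by exact_mod_cast this
      rwa [Nat.cast_pow, Nat.cast_ofNat] at h'
    have hmono := Real.log_le_log (by positivity) h2L
    rwa [Real.log_pow] at hmono
  have hc8 : (0:ℝ) < Real.sqrt 8 := Real.sqrt_pos.mpr (by norm_num)
  have hlog2 : (0:ℝ) < Real.log 2 := Real.log_pos (by norm_num)
  calc Real.log 2 / Real.sqrt 8 * Real.sqrt ℓ - Real.log 2
      ≤ Real.log 2 / Real.sqrt 8 * (Real.sqrt 8 * ((L:ℝ)+1)) - Real.log 2 := by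
        have hcnn : (0:ℝ) ≤ Real.log 2 / Real.sqrt 8 := by positivity
        nlinarith [hsq]
    _ = (L:ℝ) * Real.log 2 := by
        field_simp
        ring
    _ ≤ Real.log sf := hlog
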